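/- Let a < b be real numbers and let a = t_0 < t_1 < ⋯ < t_N = b be a partition of [a, b]. Let f : ℝ → ℝ be measurable, integrable on (a, b), and of finite pointwise total variation V on [a, b] (V is the supremum over all finite increasing sequences a ≤ s_0 < s_1 < ⋯ < s_K ≤ b of ∑_k |f(s_{k+1}) − f(s_k)|). For each i let m_i = (t_i − t_{i−1})^{−1} ∫_{t_{i−1}}^{t_i} f(x) dx be the mean of f over the i-th subinterval. Then ∑_{i=1}^{N−1} |m_{i+1} − m_i| ≤ V; that is, the total variation of the piecewise constant local average P_h f is at most the total variation of f. -/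

import Mathlib

open MeasureTheory

theorem tv_of_local_average_le_tv
    (a b : ℝ) (hab : a < b) (N : ℕ) (hN : 1 ≤ N)
    (t : ℕ → ℝ) (ht0 : t 0 = a) (htN : t N = b)
    (hmono : ∀ i < N, t i < t (i + 1))
    (f : ℝ → ℝ) (hfm : Measurable f)
    (hfi : IntegrableOn f (Set.Ioo a b))
    (V : ℝ)
    (hV : ∀ (K : ℕ) (s : ℕ → ℝ), (∀ k < K, s k < s (k + 1)) →
      a ≤ s 0 → s K ≤ b →
      ∑ k ∈ Finset.range K, |f (s (k + 1)) - f (s k)| ≤ V) :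
    ∑ i ∈ Finset.Ico 1 N,
        |((t (i + 1) - t i)⁻¹ * ∫ x in (t i)..(t (i + 1)), f x) -
          ((t i - t (i - 1))⁻¹ * ∫ x in (t (i - 1))..(t i), f x)| ≤ V := by
  -- monotonicity of t on {0,…,N}
  have hle : ∀ j, j ≤ N → ∀ i, i ≤ j → t i ≤ t j := by
    intro j
    induction j with
    | zero => intro _ i hi; rw [Nat.le_zero.mp hi]
    | succ n ih =>
      intro hj i hi
      rcases Nat.eq_or_lt_of_le hi with h | h
      · rw [h]
      · exact le_trans (ih (by omega) i (by omega)) (hmono n (by omega)).le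
  have hta : ∀ i, i ≤ N → a ≤ t i := fun i hi => ht0 ▸ hle i hi 0 (Nat.zero_le _)
  have htb : ∀ i, i ≤ N → t i ≤ b := fun i hi => htN ▸ hle N le_rfl i hi
  have hfI : IntegrableOn f (Set.Icc a b) := by
    rwa [integrableOn_Icc_iff_integrableOn_Ioo]
  have hc : ∀ i, i < N → 0 < t (i + 1) - t i := fun i hi => sub_pos.mpr (hmono i hi)
  have hII : ∀ i, i < N → IntervalIntegrable f volume (t i) (t (i + 1)) := by
    intro i hi
    apply MeasureTheory.IntegrableOn.intervalIntegrable
    apply hfI.mono_set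
    rw [Set.uIcc_of_le (hmono i hi).le]
    exact Set.Icc_subset_Icc (hta i hi.le) (htb (i + 1) hi)
  have gInt : ∀ i, i < N →
      IntervalIntegrable (fun s => f ((t (i + 1) - t i) * s + t i)) volume 0 1 := by
    intro i hi
    have h1 := (hII i hi).comp_add_right (t i)
    have h2 := h1.comp_mul_left (c := t (i + 1) - t i)
    simpa [sub_self, div_self (hc i hi).ne'] using h2
  have gMean : ∀ i, i < N →
      (t (i + 1) - t i)⁻¹ * ∫ x in (t i)..(t (i + 1)), f x
        = ∫ s in (0:ℝ)..1, f ((t (i + 1) - t i) * s + t i) := by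
    intro i hi
    rw [intervalIntegral.integral_comp_mul_add f (hc i hi).ne' (t i)]
    rw [mul_zero, zero_add, mul_one, sub_add_cancel, smul_eq_mul]
  -- integrability of the summed integrand
  have gdiffInt : ∀ i ∈ Finset.Ico 1 N,
      IntervalIntegrable
        (fun s => |f ((t (i + 1) - t i) * s + t i) - f ((t (i - 1 + 1) - t (i - 1)) * s + t (i - 1))|)
        volume 0 1 := by
    intro i hi
    rw [Finset.mem_Ico] at hi
    exact ((gInt i hi.2).sub (gInt (i - 1) (by omega))).abs
  calc
    ∑ i ∈ Finset.Ico 1 N,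
        |((t (i + 1) - t i)⁻¹ * ∫ x in (t i)..(t (i + 1)), f x) -
          ((t i - t (i - 1))⁻¹ * ∫ x in (t (i - 1))..(t i), f x)|
      = ∑ i ∈ Finset.Ico 1 N,
        |∫ s in (0:ℝ)..1,
            (f ((t (i + 1) - t i) * s + t i) - f ((t (i - 1 + 1) - t (i - 1)) * s + t (i - 1)))| := by
        apply Finset.sum_congr rfl
        intro i hi
        rw [Finset.mem_Ico] at hi
        have h1 : i - 1 + 1 = i := by omega
        have h2 := gMean (i - 1) (by omega)
        rw [intervalIntegral.integral_sub (gInt i hi.2) (gInt (i - 1) (by omega)),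
          ← gMean i hi.2, ← h2, h1]
    _ ≤ ∑ i ∈ Finset.Ico 1 N,
        ∫ s in (0:ℝ)..1,
            |f ((t (i + 1) - t i) * s + t i) - f ((t (i - 1 + 1) - t (i - 1)) * s + t (i - 1))| := by
        apply Finset.sum_le_sum
        intro i hi
        exact intervalIntegral.abs_integral_le_integral_abs zero_le_one
    _ = ∫ s in (0:ℝ)..1, ∑ i ∈ Finset.Ico 1 N,
            |f ((t (i + 1) - t i) * s + t i) - f ((t (i - 1 + 1) - t (i - 1)) * s + t (i - 1))| := by
        rw [intervalIntegral.integral_finset_sum gdiffInt]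
    _ ≤ ∫ s in (0:ℝ)..1, V := by
        have hsumInt : IntervalIntegrable
            (fun s => ∑ i ∈ Finset.Ico 1 N,
              |f ((t (i + 1) - t i) * s + t i) - f ((t (i - 1 + 1) - t (i - 1)) * s + t (i - 1))|)
            volume 0 1 := by
          have h2 := IntervalIntegrable.sum (Finset.Ico 1 N) gdiffInt
          have h3 : (fun s : ℝ => ∑ i ∈ Finset.Ico 1 N,
              |f ((t (i + 1) - t i) * s + t i) - f ((t (i - 1 + 1) - t (i - 1)) * s + t (i - 1))|)
            = (∑ i ∈ Finset.Ico 1 N, fun s : ℝ =>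
              |f ((t (i + 1) - t i) * s + t i) - f ((t (i - 1 + 1) - t (i - 1)) * s + t (i - 1))|) := by
            funext s; simp
          rw [h3]
          exact h2
        apply intervalIntegral.integral_mono_on zero_le_one hsumInt intervalIntegrable_const
        intro s hs
        obtain ⟨h0s, hs1⟩ := hs
        have key := hV (N - 1) (fun k => (t (k + 1) - t k) * s + t k) ?_ ?_ ?_
        · refine le_trans (le_of_eq ?_) key
          rw [Finset.sum_Ico_eq_sum_range]
          apply Finset.sum_congr rfl
          intro k hk
          have h1 : 1 + k - 1 = k := by omega
          rw [h1, add_comm 1 k]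
        · intro k hk
          have p1 := hc k (by omega)
          have p2 := hc (k + 1) (by omega)
          rcases eq_or_lt_of_le hs1 with h | h
          · rw [h]; nlinarith
          · nlinarith [mul_nonneg h0s p2.le, mul_pos (sub_pos.mpr h) p1]
        · have p1 := hc 0 (by omega)
          nlinarith [mul_nonneg p1.le h0s, ht0]
        · have hN1 : N - 1 + 1 = N := by omega
          rw [hN1]
          have p1 : 0 < t N - t (N - 1) := by
            have := hc (N - 1) (by omega); rwa [hN1] at this
          nlinarith [mul_le_of_le_one_right p1.le hs1, htN]
    _ = V := by simp
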